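/- Let G be the free group on two generators a, b, identified with reduced words over {a,b,a^{-1},b^{-1}}, and S = {a,b}. Define c_1 ∈ {0,1}^G identically 0, and c_2(g) = 1 iff the reduced word g begins with a. Then d_{B,S}(c_1,c_2) = 1/4 and d_{B,S}(c_1^a, c_2^a) = 3/4, where c^g(h) = c(gh). Hence the Besicovitch pseudodistance with respect to word-metric balls is not translation invariant in general. -/

import Mathlib

open Filter

noncomputable def hamDist {G Q : Type*} (U : Set G) (c₁ c₂ : G → Q) : ℕ :=
  {x ∈ U | c₁ x ≠ c₂ x}.ncard

def wordBall {G : Type*} [Group G] (S : Set G) (n : ℕ) : Set G :=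
  {g | ∃ l : List G, (∀ x ∈ l, x ∈ S ∨ x⁻¹ ∈ S) ∧ l.length ≤ n ∧ l.prod = g}

noncomputable def besDistBall {G Q : Type*} [Group G] (S : Set G) (c₁ c₂ : G → Q) : ℝ :=
  limsup (fun n => (hamDist (wordBall S n) c₁ c₂ : ℝ) / (wordBall S n).ncard) atTop

section Aux
open FreeGroup

abbrev LL := Fin 2 × Bool
abbrev GG := FreeGroup (Fin 2)


theorem reduce_cons_eq_iff (x : LL) (w : List LL) :
    reduce (x :: w) = x :: w ↔ reduce w = w ∧ w.head? ≠ some (x.1, !x.2) := by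
  constructor
  · intro h
    rw [reduce.cons] at h
    rcases hw : reduce w with _ | ⟨hd, tl⟩ <;> rw [hw] at h
    · simp only [List.casesOn] at h
      have hw' : w = [] := by injection h with _ h'; exact h'.symm
      subst hw'; simp
    · by_cases hx : x.1 = hd.1 ∧ x.2 = !hd.2
      · simp only [hx, if_true] at h
        exfalso
        have h1 : (reduce w).length ≤ w.length := (reduce.red).length_le
        rw [hw] at h1
        have := congrArg List.length h
        simp at this h1
        omega
      · simp only [hx, if_false] at h
        injection h with _ h2
        subst h2
        refine ⟨rfl, ?_⟩
        simp only [List.head?_cons, ne_eq, Option.some.injEq]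
        intro e
        apply hx
        obtain ⟨x1, x2⟩ := x; obtain ⟨h1', h2'⟩ := hd
        simp only [Prod.mk.injEq] at e
        simp [e.1, e.2]
  · rintro ⟨h1, h2⟩
    rw [reduce.cons, h1]
    cases w with
    | nil => rfl
    | cons hd tl =>
      have hx : ¬(x.1 = hd.1 ∧ x.2 = !hd.2) := by
        rintro ⟨e1, e2⟩
        apply h2
        simp only [List.head?_cons, Option.some.injEq]
        obtain ⟨x1, x2⟩ := x; obtain ⟨h1', h2'⟩ := hd
        simp_all
      simp [hx]

def Wd : ℕ → Finset (List LL)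
  | 0 => {[]}
  | n+1 => Finset.univ.biUnion fun x : LL =>
      ((Wd n).filter fun w => w.head? ≠ some (x.1, !x.2)).image (x :: ·)

theorem mem_Wd (n : ℕ) (w : List LL) : w ∈ Wd n ↔ reduce w = w ∧ w.length = n := by
  induction n generalizing w with
  | zero =>
    simp only [Wd, Finset.mem_singleton, List.length_eq_zero_iff]
    constructor
    · rintro rfl; simp
    · rintro ⟨_, rfl⟩; rfl
  | succ n ih =>
    simp only [Wd, Finset.mem_biUnion, Finset.mem_image, Finset.mem_filter, Finset.mem_univ,
      true_and]
    constructor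
    · rintro ⟨x, v, ⟨hv, hh⟩, rfl⟩
      obtain ⟨h1, h2⟩ := (ih v).1 hv
      exact ⟨(reduce_cons_eq_iff x v).2 ⟨h1, hh⟩, by simp [h2]⟩
    · rintro ⟨hr, hl⟩
      cases w with
      | nil => simp at hl
      | cons x v =>
        obtain ⟨h1, h2⟩ := (reduce_cons_eq_iff x v).1 hr
        exact ⟨x, v, ⟨(ih v).2 ⟨h1, by simpa using hl⟩, h2⟩, rfl⟩

def Wh (z : LL) (n : ℕ) : Finset (List LL) := (Wd n).filter fun w => w.head? = some z

theorem mem_Wh (z : LL) (n : ℕ) (w : List LL) :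
    w ∈ Wh z n ↔ reduce w = w ∧ w.length = n ∧ w.head? = some z := by
  simp [Wh, mem_Wd, and_assoc]

theorem Wd_eq_biUnion (n : ℕ) : Wd (n+1) = Finset.univ.biUnion fun z : LL => Wh z (n+1) := by
  ext w
  simp only [Finset.mem_biUnion, Finset.mem_univ, true_and, mem_Wh, mem_Wd]
  constructor
  · rintro ⟨h1, h2⟩
    cases w with
    | nil => simp at h2
    | cons x v => exact ⟨x, h1, h2, rfl⟩
  · rintro ⟨z, h1, h2, _⟩; exact ⟨h1, h2⟩

theorem card_Wh : ∀ n : ℕ, ∀ z : LL, (Wh z (n+1)).card = 3 ^ n := by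
  intro n
  induction n with
  | zero =>
    intro z
    have : Wh z 1 = {[z]} := by
      ext w
      simp only [mem_Wh, Finset.mem_singleton, List.length_eq_one_iff]
      constructor
      · rintro ⟨_, ⟨y, rfl⟩, h3⟩
        simp at h3; simp [h3]
      · rintro rfl
        exact ⟨rfl, ⟨z, rfl⟩, rfl⟩
    simp [this]
  | succ n ih =>
    intro z
    have hset : Wh z (n+2) =
        ((Wd (n+1)).filter fun w => w.head? ≠ some (z.1, !z.2)).image (z :: ·) := by
      ext w
      simp only [mem_Wh, Finset.mem_image, Finset.mem_filter, mem_Wd]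
      constructor
      · rintro ⟨h1, h2, h3⟩
        cases w with
        | nil => simp at h3
        | cons x v =>
          simp only [List.head?_cons, Option.some.injEq] at h3
          subst h3
          obtain ⟨r1, r2⟩ := (reduce_cons_eq_iff x v).1 h1
          exact ⟨v, ⟨⟨r1, by simpa using h2⟩, r2⟩, rfl⟩
      · rintro ⟨v, ⟨⟨r1, r2⟩, r3⟩, rfl⟩
        exact ⟨(reduce_cons_eq_iff z v).2 ⟨r1, r3⟩, by simp [r2], rfl⟩
    have hcardim : (Wh z (n+2)).card =
        ((Wd (n+1)).filter fun w => w.head? ≠ some (z.1, !z.2)).card := by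
      rw [hset]
      exact Finset.card_image_of_injective _ (fun a b h => by injection h)
    have hfilter : ((Wd (n+1)).filter fun w => w.head? ≠ some (z.1, !z.2)).card
        = (Wd (n+1)).card - (Wh (z.1, !z.2) (n+1)).card := by
      rw [Wh, Finset.filter_not, Finset.card_sdiff_of_subset (Finset.filter_subset _ _)]
    have hcardWd : (Wd (n+1)).card = 4 * 3 ^ n := by
      rw [Wd_eq_biUnion]
      rw [Finset.card_biUnion]
      · simp only [ih]
        simp [Finset.card_univ]
      · intro x _ y _ hxy
        simp only [Finset.disjoint_left, mem_Wh]
        rintro w ⟨_, _, h1⟩ ⟨_, _, h2⟩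
        rw [h1] at h2
        exact hxy (by injection h2)
    rw [hcardim, hfilter, hcardWd, ih]
    ring_nf
    omega

def Bd (n : ℕ) : Finset (List LL) := (Finset.range (n+1)).biUnion Wd

theorem mem_Bd (n : ℕ) (w : List LL) : w ∈ Bd n ↔ reduce w = w ∧ w.length ≤ n := by
  simp only [Bd, Finset.mem_biUnion, Finset.mem_range, mem_Wd]
  constructor
  · rintro ⟨k, hk, h1, rfl⟩; exact ⟨h1, by omega⟩
  · rintro ⟨h1, h2⟩; exact ⟨w.length, by omega, h1, rfl⟩

theorem card_Bd (n : ℕ) : (Bd n).card + 1 = 2 * 3 ^ n := by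
  induction n with
  | zero =>
    have : Bd 0 = {[]} := by
      ext w; simp [mem_Bd, List.length_eq_zero_iff]
      rintro rfl; simp
    simp [this]
  | succ n ih =>
    have : Bd (n+1) = Bd n ∪ Wd (n+1) := by
      ext w
      simp only [Finset.mem_union, mem_Bd, mem_Wd]
      constructor
      · rintro ⟨h1, h2⟩
        rcases Nat.lt_or_ge w.length (n+1) with h | h
        · exact Or.inl ⟨h1, by omega⟩
        · exact Or.inr ⟨h1, by omega⟩
      · rintro (⟨h1, h2⟩ | ⟨h1, h2⟩) <;> exact ⟨h1, by omega⟩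
    have hdisj : Disjoint (Bd n) (Wd (n+1)) := by
      simp only [Finset.disjoint_left, mem_Bd, mem_Wd]
      rintro w ⟨_, h1⟩ ⟨_, h2⟩; omega
    rw [this, Finset.card_union_of_disjoint hdisj]
    have hWd : (Wd (n+1)).card = 4 * 3 ^ n := by
      rw [Wd_eq_biUnion, Finset.card_biUnion]
      · simp [card_Wh, Finset.card_univ]
      · intro x _ y _ hxy
        simp only [Finset.disjoint_left, mem_Wh]
        rintro w ⟨_, _, h1⟩ ⟨_, _, h2⟩
        rw [h1] at h2
        exact hxy (by injection h2)
    rw [hWd]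
    ring_nf
    ring_nf at ih
    omega

def Bh (z : LL) (n : ℕ) : Finset (List LL) := (Bd n).filter fun w => w.head? = some z

theorem mem_Bh (z : LL) (n : ℕ) (w : List LL) :
    w ∈ Bh z n ↔ reduce w = w ∧ w.length ≤ n ∧ w.head? = some z := by
  simp [Bh, mem_Bd, and_assoc]

theorem card_Bh (z : LL) (n : ℕ) : 2 * (Bh z n).card + 1 = 3 ^ n := by
  induction n with
  | zero =>
    have : Bh z 0 = ∅ := by
      ext w
      simp only [mem_Bh, Finset.notMem_empty, iff_false]
      rintro ⟨_, h2, h3⟩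
      have h2' : w = [] := List.length_eq_zero_iff.mp (by omega)
      subst h2'; simp at h3
    simp [this]
  | succ n ih =>
    have : Bh z (n+1) = Bh z n ∪ Wh z (n+1) := by
      ext w
      simp only [Finset.mem_union, mem_Bh, mem_Wh]
      constructor
      · rintro ⟨h1, h2, h3⟩
        rcases Nat.lt_or_ge w.length (n+1) with h | h
        · exact Or.inl ⟨h1, by omega, h3⟩
        · exact Or.inr ⟨h1, by omega, h3⟩
      · rintro (⟨h1, h2, h3⟩ | ⟨h1, h2, h3⟩) <;> exact ⟨h1, by omega, h3⟩
    have hdisj : Disjoint (Bh z n) (Wh z (n+1)) := by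
      simp only [Finset.disjoint_left, mem_Bh, mem_Wh]
      rintro w ⟨_, h1, _⟩ ⟨_, h2, _⟩; omega
    rw [this, Finset.card_union_of_disjoint hdisj, card_Wh]
    ring_nf
    ring_nf at ih
    omega

theorem prod_map_mk (w : List LL) :
    (w.map fun p => cond p.2 (FreeGroup.of p.1) (FreeGroup.of p.1)⁻¹).prod = FreeGroup.mk w := by
  induction w with
  | nil => rfl
  | cons p t ih =>
    rw [List.map_cons, List.prod_cons, ih, show (p :: t) = [p] ++ t from rfl,
      ← FreeGroup.mul_mk]
    congr 1
    obtain ⟨i, b⟩ := p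
    cases b
    · show (FreeGroup.of i)⁻¹ = _
      rw [FreeGroup.of, FreeGroup.inv_mk]
      rfl
    · rfl

theorem my_norm_prod_le (l : List GG) (h : ∀ x ∈ l, FreeGroup.norm x ≤ 1) :
    FreeGroup.norm l.prod ≤ l.length := by
  induction l with
  | nil => simp [FreeGroup.norm_one]
  | cons x t ih =>
    rw [List.prod_cons]
    calc FreeGroup.norm (x * t.prod) ≤ FreeGroup.norm x + FreeGroup.norm t.prod :=
          FreeGroup.norm_mul_le _ _
      _ ≤ 1 + t.length := by
          have := ih (fun y hy => h y (List.mem_cons_of_mem _ hy))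
          have := h x List.mem_cons_self
          omega
      _ = (x :: t).length := by simp [Nat.add_comm]

theorem wordBall_eq (n : ℕ) :
    wordBall ({FreeGroup.of 0, FreeGroup.of 1} : Set GG) n
      = {g : GG | g.toWord.length ≤ n} := by
  ext g
  constructor
  · rintro ⟨l, hl, hlen, rfl⟩
    have hn : ∀ x ∈ l, FreeGroup.norm x ≤ 1 := by
      intro x hx
      rcases hl x hx with h | h
      · rcases h with rfl | rfl <;> simp [FreeGroup.norm_of]
      · rcases h with h | h
        · have : x = (FreeGroup.of 0)⁻¹ := by rw [← h]; simp
          rw [this]; simp [FreeGroup.norm_inv_eq, FreeGroup.norm_of]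
        · have : x = (FreeGroup.of 1)⁻¹ := by rw [← h]; simp
          rw [this]; simp [FreeGroup.norm_inv_eq, FreeGroup.norm_of]
    exact le_trans (my_norm_prod_le l hn) hlen
  · intro hg
    refine ⟨g.toWord.map fun p => cond p.2 (FreeGroup.of p.1) (FreeGroup.of p.1)⁻¹, ?_, ?_, ?_⟩
    · rintro x hx
      simp only [List.mem_map] at hx
      obtain ⟨⟨i, b⟩, _, rfl⟩ := hx
      fin_cases i <;> cases b <;> simp
    · simpa using hg
    · rw [prod_map_mk, FreeGroup.mk_toWord]

theorem ncard_eq_card (s : Finset (List LL)) (hs : ∀ w ∈ s, reduce w = w) :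
    {g : GG | g.toWord ∈ s}.ncard = s.card := by
  have himage : {g : GG | g.toWord ∈ s} = ↑(s.image FreeGroup.mk) := by
    ext g
    simp only [Set.mem_setOf_eq, Finset.coe_image, Set.mem_image, Finset.mem_coe]
    constructor
    · intro h
      exact ⟨g.toWord, h, FreeGroup.mk_toWord⟩
    · rintro ⟨w, hw, rfl⟩
      rw [FreeGroup.toWord_mk, hs w hw]
      exact hw
  rw [himage, Set.ncard_coe_finset]
  apply Finset.card_image_of_injOn
  intro w1 h1 w2 h2 he
  have := congrArg FreeGroup.toWord he
  rwa [FreeGroup.toWord_mk, FreeGroup.toWord_mk, hs w1 h1, hs w2 h2] at this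

theorem head_a_mul (h : GG) :
    (FreeGroup.of 0 * h).toWord.head? = some ((0 : Fin 2), true)
      ↔ h.toWord.head? ≠ some ((0 : Fin 2), false) := by
  have he : FreeGroup.of 0 * h = FreeGroup.mk (((0 : Fin 2), true) :: h.toWord) := by
    rw [FreeGroup.of, ← FreeGroup.mk_toWord (x := h), FreeGroup.mul_mk, FreeGroup.mk_toWord]
    rfl
  have hred : reduce h.toWord = h.toWord := FreeGroup.reduce_toWord h
  rw [he, FreeGroup.toWord_mk, FreeGroup.reduce.cons, hred]
  rcases hw : h.toWord with _ | ⟨y, tl⟩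
  · simp
  · by_cases hy : y = ((0 : Fin 2), false)
    · subst hy
      have hcond : (((0:Fin 2), true)).1 = ((0:Fin 2), false).1
          ∧ (((0:Fin 2), true)).2 = !((0:Fin 2), false).2 := by simp
      rw [hw] at hred
      have htl : tl.head? ≠ some ((0:Fin 2), true) := by
        have := (reduce_cons_eq_iff _ _).1 hred
        simpa using this.2
      simp [hcond, htl]
    · have hcond : ¬((((0:Fin 2), true)).1 = y.1 ∧ (((0:Fin 2), true)).2 = !y.2) := by
        rintro ⟨e1, e2⟩
        apply hy
        obtain ⟨i, b⟩ := y
        simp only at e1 e2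
        have hb : b = false := by simpa using e2.symm
        simp [← e1, hb]
      show (if ((0:Fin 2),true).1 = y.1 ∧ ((0:Fin 2),true).2 = !y.2 then tl
          else ((0:Fin 2),true) :: y :: tl).head? = some ((0:Fin 2), true)
          ↔ (y :: tl).head? ≠ some ((0:Fin 2), false)
      rw [if_neg hcond]
      simp only [List.head?_cons, ne_eq, Option.some.injEq]
      constructor
      · intro _ hcon
        exact hy hcon
      · intro _
        trivial


theorem tendsto_inv3 : Tendsto (fun n : ℕ => ((3:ℝ)⁻¹)^n) atTop (nhds 0) := by
  apply tendsto_pow_atTop_nhds_zero_of_lt_one <;> norm_num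

theorem lim1 : Tendsto (fun n : ℕ => (((3:ℝ)^n - 1)/2) / (2 * 3^n - 1)) atTop (nhds (1/4)) := by
  have h3 : ∀ n : ℕ, (3:ℝ)^n ≠ 0 := fun n => pow_ne_zero n (by norm_num)
  have heq : (fun n : ℕ => (((3:ℝ)^n - 1)/2) / (2 * 3^n - 1))
      = fun n : ℕ => (1 - ((3:ℝ)⁻¹)^n) / (2 * (2 - ((3:ℝ)⁻¹)^n)) := by
    funext n
    rw [inv_pow]
    have hd : 2 * (3:ℝ)^n - 1 ≠ 0 := by
      have : (1:ℝ) ≤ 3^n := one_le_pow₀ (by norm_num)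
      nlinarith
    field_simp
  rw [heq]
  have hnum : Tendsto (fun n : ℕ => 1 - ((3:ℝ)⁻¹)^n) atTop (nhds 1) := by
    simpa using tendsto_const_nhds.sub tendsto_inv3
  have hden : Tendsto (fun n : ℕ => 2 * (2 - ((3:ℝ)⁻¹)^n)) atTop (nhds 4) := by
    have : Tendsto (fun n : ℕ => 2 - ((3:ℝ)⁻¹)^n) atTop (nhds 2) := by
      simpa using tendsto_const_nhds.sub tendsto_inv3
    simpa [show (4:ℝ) = 2 * 2 by norm_num] using tendsto_const_nhds.mul this
  exact hnum.div hden (by norm_num)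

theorem lim2 : Tendsto (fun n : ℕ => (((3:ℝ)^(n+1) - 1)/2) / (2 * 3^n - 1)) atTop
    (nhds (3/4)) := by
  have heq : (fun n : ℕ => (((3:ℝ)^(n+1) - 1)/2) / (2 * 3^n - 1))
      = fun n : ℕ => (3 - ((3:ℝ)⁻¹)^n) / (2 * (2 - ((3:ℝ)⁻¹)^n)) := by
    funext n
    rw [inv_pow]
    have hd : 2 * (3:ℝ)^n - 1 ≠ 0 := by
      have : (1:ℝ) ≤ 3^n := one_le_pow₀ (by norm_num)
      nlinarith
    field_simp
    ring
  rw [heq]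
  have hnum : Tendsto (fun n : ℕ => 3 - ((3:ℝ)⁻¹)^n) atTop (nhds 3) := by
    simpa using tendsto_const_nhds.sub tendsto_inv3
  have hden : Tendsto (fun n : ℕ => 2 * (2 - ((3:ℝ)⁻¹)^n)) atTop (nhds 4) := by
    have : Tendsto (fun n : ℕ => 2 - ((3:ℝ)⁻¹)^n) atTop (nhds 2) := by
      simpa using tendsto_const_nhds.sub tendsto_inv3
    simpa [show (4:ℝ) = 2 * 2 by norm_num] using tendsto_const_nhds.mul this
  exact hnum.div hden (by norm_num)

theorem wordBall_ncard (n : ℕ) :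
    (wordBall ({FreeGroup.of 0, FreeGroup.of 1} : Set GG) n).ncard = (Bd n).card := by
  rw [wordBall_eq]
  have : {g : GG | g.toWord.length ≤ n} = {g : GG | g.toWord ∈ Bd n} := by
    ext g
    simp [mem_Bd, FreeGroup.reduce_toWord]
  rw [this]
  exact ncard_eq_card _ (fun w hw => ((mem_Bd _ _).1 hw).1)

end Aux

theorem besicovitch_ball_not_translation_invariant :
    let G := FreeGroup (Fin 2)
    let a : G := FreeGroup.of 0
    let b : G := FreeGroup.of 1
    let S : Set G := {a, b}
    let c₁ : G → Bool := fun _ => false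
    let c₂ : G → Bool := fun g => decide (g.toWord.head? = some (0, true))
    besDistBall S c₁ c₂ = 1 / 4 ∧
    besDistBall S (fun h => c₁ (a * h)) (fun h => c₂ (a * h)) = 3 / 4 := by
  intro G a b S c₁ c₂
  have hBd : ∀ n : ℕ, ((Bd n).card : ℝ) = 2 * 3 ^ n - 1 := by
    intro n
    have := congrArg (Nat.cast : ℕ → ℝ) (card_Bd n)
    push_cast at this
    linarith
  have hBh : ∀ (z : LL) (n : ℕ), ((Bh z n).card : ℝ) = (3 ^ n - 1) / 2 := by
    intro z n
    have := congrArg (Nat.cast : ℕ → ℝ) (card_Bh z n)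
    push_cast at this
    linarith
  constructor
  · have hfun : ∀ n : ℕ, (hamDist (wordBall S n) c₁ c₂ : ℝ) / (wordBall S n).ncard
        = (((3:ℝ)^n - 1)/2) / (2 * 3^n - 1) := by
      intro n
      have hset : {x ∈ wordBall S n | c₁ x ≠ c₂ x}
          = {g : G | g.toWord ∈ Bh ((0 : Fin 2), true) n} := by
        ext g
        rw [Set.mem_sep_iff, wordBall_eq]
        simp only [Set.mem_setOf_eq, mem_Bh, FreeGroup.reduce_toWord, true_and]
        show g.toWord.length ≤ n ∧ false ≠ c₂ g ↔ _
        have : (false ≠ c₂ g) ↔ g.toWord.head? = some ((0 : Fin 2), true) := by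
          show false ≠ decide _ ↔ _
          simp
        rw [this, and_comm]
      have h1 : hamDist (wordBall S n) c₁ c₂ = (Bh ((0 : Fin 2), true) n).card := by
        rw [hamDist, hset]
        exact ncard_eq_card _ (fun w hw => ((mem_Bh _ _ _).1 hw).1)
      rw [h1, wordBall_ncard, hBd, hBh]
    unfold besDistBall
    rw [funext hfun]
    exact lim1.limsup_eq
  · have hfun : ∀ n : ℕ,
        (hamDist (wordBall S n) (fun h => c₁ (a * h)) (fun h => c₂ (a * h)) : ℝ)
          / (wordBall S n).ncard
        = (((3:ℝ)^(n+1) - 1)/2) / (2 * 3^n - 1) := by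
      intro n
      have hset : {x ∈ wordBall S n | (fun h => c₁ (a * h)) x ≠ (fun h => c₂ (a * h)) x}
          = {g : G | g.toWord ∈ (Bd n).filter
              fun w => w.head? ≠ some ((0 : Fin 2), false)} := by
        ext g
        rw [Set.mem_sep_iff, wordBall_eq]
        simp only [Set.mem_setOf_eq, Finset.mem_filter, mem_Bd, FreeGroup.reduce_toWord,
          true_and]
        have : ((fun h => c₁ (a * h)) g ≠ (fun h => c₂ (a * h)) g)
            ↔ g.toWord.head? ≠ some ((0 : Fin 2), false) := by
          show false ≠ decide _ ↔ _
          simp [head_a_mul g]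
          exact head_a_mul g
        rw [this]
        exact Iff.rfl
      have hle : (Bh ((0 : Fin 2), false) n).card ≤ (Bd n).card :=
        Finset.card_le_card (Finset.filter_subset _ _)
      have hcardf : ((Bd n).filter fun w => w.head? ≠ some ((0 : Fin 2), false)).card
          = (Bd n).card - (Bh ((0 : Fin 2), false) n).card := by
        rw [Bh, Finset.filter_not, Finset.card_sdiff_of_subset (Finset.filter_subset _ _)]
      have h1 : hamDist (wordBall S n) (fun h => c₁ (a * h)) (fun h => c₂ (a * h))
          = (Bd n).card - (Bh ((0 : Fin 2), false) n).card := by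
        rw [hamDist, hset, ← hcardf]
        exact ncard_eq_card _ (fun w hw => ((mem_Bd _ _).1 (Finset.mem_filter.1 hw).1).1)
      rw [h1, wordBall_ncard]
      rw [Nat.cast_sub hle, hBd, hBh]
      have h3 : ((3:ℝ))^(n+1) = 3 * 3^n := by ring
      rw [h3]
      ring
    unfold besDistBall
    rw [funext hfun]
    exact lim2.limsup_eq
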